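/- arXiv:1205.6198 — 2 statements merged into one kernel-verified Lean document; each statement's English description precedes it below -/
import Mathlib

section
/- For every x ∈ ℝ³∖{0} (r=|x|) the identity ∫_{ℝ³} φ'(E(x,v)) w² dv = −(e^{−μ₀(r)}/γ)(γ p₀(r) + ρ₀(r)) holds; if moreover λ₀, μ₀ ∈ C¹([0,∞)) satisfy the static Einstein field equations, then this quantity also equals −(e^{−2λ₀(r)−μ₀(r)}/(4πγ²r)) (λ₀'(r)+μ₀'(r)). -/
noncomputable section

open Real MeasureTheory

abbrev E3 := EuclideanSpace ℝ (Fin 3)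

/-- Euclidean dot product on `E3`. -/
def dot3 (x v : E3) : ℝ := ∑ i, x i * v i

/-- `⟨v⟩ = √(1+γ|v|²)`. -/
def jap (γ : ℝ) (v : E3) : ℝ := Real.sqrt (1 + γ * ‖v‖ ^ 2)

/-- The radial momentum `w = (x·v)/|x|`. -/
def wrad (x v : E3) : ℝ := dot3 x v / ‖x‖

/-- The particle energy `E(x,v) = e^{μ₀(|x|)}⟨v⟩`. -/
def energy (γ : ℝ) (μ₀ : ℝ → ℝ) (z : E3 × E3) : ℝ :=
  Real.exp (μ₀ ‖z.1‖) * jap γ z.2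

/-- The Poisson bracket `{f,g} = ∂ₓf·∂ᵥg − ∂ᵥf·∂ₓg`. -/
def pb (f g : E3 × E3 → ℝ) (z : E3 × E3) : ℝ :=
  ∑ i : Fin 3,
    (fderiv ℝ f z (EuclideanSpace.single i 1, 0) * fderiv ℝ g z (0, EuclideanSpace.single i 1)
     - fderiv ℝ f z (0, EuclideanSpace.single i 1) * fderiv ℝ g z (EuclideanSpace.single i 1, 0))

/-- Action of a `3×3` matrix on `E3`. -/
def matAct (A : Matrix (Fin 3) (Fin 3) ℝ) (x : E3) : E3 :=
  (WithLp.equiv 2 (Fin 3 → ℝ)).symm (A.mulVec ((WithLp.equiv 2 (Fin 3 → ℝ)) x))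

/-- Spherical symmetry: invariance under the canonical action of SO(3). -/
def SphSym (h : E3 × E3 → ℝ) : Prop :=
  ∀ A : Matrix (Fin 3) (Fin 3) ℝ, A ∈ Matrix.orthogonalGroup (Fin 3) ℝ → A.det = 1 →
    ∀ x v : E3, h (matAct A x, matAct A v) = h (x, v)

/-- Radial unit vector, used to define radial representatives of
spherically symmetric quantities. -/
def er : E3 := EuclideanSpace.single 0 1

/-- The steady state distribution `f₀ = φ(E)`. -/
def f0 (γ : ℝ) (μ₀ φ : ℝ → ℝ) : E3 × E3 → ℝ := fun z => φ (energy γ μ₀ z)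

/-- The steady state energy density `ρ₀(r) = ∫ ⟨v⟩ f₀ dv`. -/
def rho0 (γ : ℝ) (μ₀ φ : ℝ → ℝ) (r : ℝ) : ℝ :=
  ∫ v : E3, jap γ v * f0 γ μ₀ φ (r • er, v)

/-- The steady state radial pressure `p₀(r) = ∫ (w²/⟨v⟩) f₀ dv`. -/
def p0 (γ : ℝ) (μ₀ φ : ℝ → ℝ) (r : ℝ) : ℝ :=
  ∫ v : E3, ((wrad (r • er) v) ^ 2 / jap γ v) * f0 γ μ₀ φ (r • er, v)

/-- The static Einstein field equations for a steady state `(f₀,lam0,μ₀)`. -/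
def FieldEqs (γ : ℝ) (lam0 μ₀ φ : ℝ → ℝ) : Prop :=
  (∀ r > 0, Real.exp (-2 * lam0 r) * (2 * r * deriv lam0 r - 1) + 1
      = 8 * π * γ * r ^ 2 * rho0 γ μ₀ φ r) ∧
  (∀ r > 0, Real.exp (-2 * lam0 r) * (2 * r * deriv μ₀ r + 1) - 1
      = 8 * π * γ ^ 2 * r ^ 2 * p0 γ μ₀ φ r)

/-- The linearly dynamically accessible perturbation generated by `h`. -/
def deltaF (γ : ℝ) (lam0 μ₀ φ : ℝ → ℝ) (h : E3 × E3 → ℝ) : E3 × E3 → ℝ :=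
  fun z =>
    Real.exp (-lam0 ‖z.1‖) * pb h (f0 γ μ₀ φ) z
    + 4 * π * γ ^ 3 * ‖z.1‖ * Real.exp (2 * μ₀ ‖z.1‖ + lam0 ‖z.1‖) *
        deriv φ (energy γ μ₀ z) * ((wrad z.1 z.2) ^ 2 / jap γ z.2) *
        ∫ vt : E3, deriv φ (energy γ μ₀ (z.1, vt)) * h (z.1, vt) * wrad z.1 vt

/-- `δρ(s) = ∫ ⟨v⟩ δf dv` at radius `s`. -/
def deltaRho (γ : ℝ) (δf : E3 × E3 → ℝ) (s : ℝ) : ℝ :=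
  ∫ v : E3, jap γ v * δf (s • er, v)

/-- The induced metric perturbation `δλ(r) = γ e^{2lam0} (4π/r) ∫₀^r s² δρ(s) ds`. -/
def deltaLambda (γ : ℝ) (lam0 : ℝ → ℝ) (δf : E3 × E3 → ℝ) (r : ℝ) : ℝ :=
  γ * Real.exp (2 * lam0 r) * (4 * π / r) * ∫ s in (0:ℝ)..r, s ^ 2 * deltaRho γ δf s

-- basic jap facts
lemma jap_pos {γ : ℝ} (hγ : 0 < γ) (v : E3) : 0 < jap γ v :=
  Real.sqrt_pos.mpr (by positivity)

lemma jap_eq_sum {γ : ℝ} (v : E3) : jap γ v = Real.sqrt (1 + γ * ∑ i, v i ^ 2) := by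
  rw [jap, EuclideanSpace.norm_eq, Real.sq_sqrt (by positivity)]
  simp [sq_abs]

lemma sqrt_mul_abs_le_sqrt {γ : ℝ} (hγ : 0 < γ) (t s : ℝ) (hs : t ^ 2 ≤ s) :
    Real.sqrt γ * |t| ≤ Real.sqrt (1 + γ * s) := by
  have : Real.sqrt γ * |t| = Real.sqrt (γ * t ^ 2) := by
    rw [Real.sqrt_mul hγ.le, Real.sqrt_sq_eq_abs]
  rw [this]
  apply Real.sqrt_le_sqrt
  nlinarith

lemma deriv_phi_zero {E₀ : ℝ} {φ : ℝ → ℝ} (hφ : ContDiff ℝ 1 φ)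
    (hφzero : ∀ s, E₀ ≤ s → φ s = 0) : ∀ s, E₀ ≤ s → deriv φ s = 0 := by
  intro s hs
  rcases eq_or_lt_of_le hs with rfl | h
  · have hu : UniqueDiffWithinAt ℝ (Set.Ici E₀) E₀ := uniqueDiffOn_Ici E₀ E₀ Set.self_mem_Ici
    have hd : HasDerivWithinAt φ (deriv φ E₀) (Set.Ici E₀) E₀ :=
      ((hφ.differentiable one_ne_zero E₀).hasDerivAt).hasDerivWithinAt
    have hz : HasDerivWithinAt φ 0 (Set.Ici E₀) E₀ := by
      have h0 : HasDerivWithinAt (fun _ : ℝ => (0 : ℝ)) 0 (Set.Ici E₀) E₀ :=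
        (hasDerivAt_const _ _).hasDerivWithinAt
      exact h0.congr (fun y hy => hφzero y hy) (hφzero E₀ le_rfl)
    rw [← hd.derivWithin hu, hz.derivWithin hu]
  · have hev : φ =ᶠ[nhds s] (fun _ => (0 : ℝ)) := by
      filter_upwards [Ioi_mem_nhds h] with y hy
      exact hφzero y (le_of_lt hy)
    rw [hev.deriv_eq]
    simp

lemma oneD {γ E₀ : ℝ} (hγ : 0 < γ) (hE₀ : 0 < E₀) {φ : ℝ → ℝ} (hφ : ContDiff ℝ 1 φ)
    (hφzero : ∀ s, E₀ ≤ s → φ s = 0)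
    (a c : ℝ) (ha : 0 < a) (hc : 0 ≤ c) :
    ∫ t : ℝ, (a * γ * deriv φ (a * Real.sqrt (1 + γ * (t ^ 2 + c))) * t ^ 2
      + φ (a * Real.sqrt (1 + γ * (t ^ 2 + c))) *
        (Real.sqrt (1 + γ * (t ^ 2 + c)) + γ * t ^ 2 / Real.sqrt (1 + γ * (t ^ 2 + c)))) = 0 := by
  have hφd0 := deriv_phi_zero hφ hφzero
  set J : ℝ → ℝ := fun t => Real.sqrt (1 + γ * (t ^ 2 + c)) with hJdef
  have hqpos : ∀ t : ℝ, 0 < 1 + γ * (t ^ 2 + c) := fun t => by nlinarith [sq_nonneg t]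
  have hJpos : ∀ t, 0 < J t := fun t => Real.sqrt_pos.mpr (hqpos t)
  have hJc : ContDiff ℝ 1 J := by
    apply ContDiff.sqrt
    · exact contDiff_const.add (contDiff_const.mul ((contDiff_id.pow 2).add contDiff_const))
    · exact fun t => (hqpos t).ne'
  set H : ℝ → ℝ := fun t => φ (a * J t) * (t * J t) with hHdef
  have hHc : ContDiff ℝ 1 H := (hφ.comp (contDiff_const.mul hJc)).mul (contDiff_id.mul hJc)
  have hbig : ∀ t : ℝ, E₀ / (a * Real.sqrt γ) < |t| → E₀ ≤ a * J t := by
    intro t ht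
    have hpos : 0 < a * Real.sqrt γ := by positivity
    have h1 : E₀ < |t| * (a * Real.sqrt γ) := (div_lt_iff₀ hpos).mp ht
    have h2 : Real.sqrt γ * |t| ≤ J t := sqrt_mul_abs_le_sqrt hγ t (t ^ 2 + c) (by linarith)
    nlinarith
  have hsupp : HasCompactSupport H := by
    apply HasCompactSupport.intro (isCompact_closedBall (0 : ℝ) (E₀ / (a * Real.sqrt γ)))
    intro t ht
    have h2 : E₀ / (a * Real.sqrt γ) < |t| := by
      simpa [Real.dist_eq, Metric.mem_closedBall, not_le] using ht
    simp [hHdef, hφzero _ (hbig t h2)]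
  have hder : ∀ t : ℝ, HasDerivAt H (a * γ * deriv φ (a * J t) * t ^ 2
      + φ (a * J t) * (J t + γ * t ^ 2 / J t)) t := by
    intro t
    have hq : HasDerivAt (fun t : ℝ => 1 + γ * (t ^ 2 + c)) (γ * (2 * t)) t := by
      have := (((hasDerivAt_pow 2 t).add_const c).const_mul γ).const_add 1
      simpa using this
    have hJ' : HasDerivAt J (1 / (2 * J t) * (γ * (2 * t))) t :=
      (Real.hasDerivAt_sqrt (hqpos t).ne').comp t hq
    have hφ' : HasDerivAt (fun t => φ (a * J t))
        (deriv φ (a * J t) * (a * (1 / (2 * J t) * (γ * (2 * t))))) t :=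
      ((hφ.differentiable one_ne_zero _).hasDerivAt).comp t (hJ'.const_mul a)
    have hg : HasDerivAt (fun t => t * J t)
        (1 * J t + t * (1 / (2 * J t) * (γ * (2 * t)))) t := (hasDerivAt_id t).mul hJ'
    have hmul := hφ'.mul hg
    refine hmul.congr_deriv ?_
    have hJne := (hJpos t).ne'
    field_simp
  have hintrw : (fun t : ℝ => a * γ * deriv φ (a * J t) * t ^ 2
      + φ (a * J t) * (J t + γ * t ^ 2 / J t)) = deriv H := by
    funext t
    exact ((hder t).deriv).symm
  rw [hintrw]
  have hderiv_int : Integrable (deriv H) :=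
    (hHc.continuous_deriv le_rfl).integrable_of_hasCompactSupport hsupp.deriv
  rw [← intervalIntegral.integral_Iic_add_Ioi (b := (0:ℝ)) hderiv_int.integrableOn hderiv_int.integrableOn,
    hsupp.integral_Iic_deriv_eq hHc 0, hsupp.integral_Ioi_deriv_eq hHc 0]
  ring

lemma piIBP {γ E₀ : ℝ} (hγ : 0 < γ) (hE₀ : 0 < E₀) {φ : ℝ → ℝ} (hφ : ContDiff ℝ 1 φ)
    (hφzero : ∀ s, E₀ ≤ s → φ s = 0)
    (a : ℝ) (ha : 0 < a) :
    ∫ y : Fin 3 → ℝ, (a * γ * deriv φ (a * Real.sqrt (1 + γ * ∑ i, y i ^ 2)) * y 0 ^ 2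
      + φ (a * Real.sqrt (1 + γ * ∑ i, y i ^ 2)) *
        (Real.sqrt (1 + γ * ∑ i, y i ^ 2) + γ * y 0 ^ 2 / Real.sqrt (1 + γ * ∑ i, y i ^ 2))) = 0 := by
  have hφd0 := deriv_phi_zero hφ hφzero
  set G : (Fin 3 → ℝ) → ℝ := fun y =>
    a * γ * deriv φ (a * Real.sqrt (1 + γ * ∑ i, y i ^ 2)) * y 0 ^ 2
      + φ (a * Real.sqrt (1 + γ * ∑ i, y i ^ 2)) *
        (Real.sqrt (1 + γ * ∑ i, y i ^ 2) + γ * y 0 ^ 2 / Real.sqrt (1 + γ * ∑ i, y i ^ 2))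
    with hGdef
  have hsum_nonneg : ∀ y : Fin 3 → ℝ, (0:ℝ) ≤ ∑ i, y i ^ 2 := fun y =>
    Finset.sum_nonneg fun i _ => sq_nonneg _
  have hqpos : ∀ y : Fin 3 → ℝ, 0 < 1 + γ * ∑ i, y i ^ 2 := fun y => by nlinarith [hsum_nonneg y]
  have hScont : Continuous fun y : Fin 3 → ℝ => ∑ i, y i ^ 2 :=
    continuous_finset_sum _ fun i _ => (continuous_apply i).pow 2
  have hJcont : Continuous fun y : Fin 3 → ℝ => Real.sqrt (1 + γ * ∑ i, y i ^ 2) :=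
    (continuous_const.add (continuous_const.mul hScont)).sqrt
  have hGcont : Continuous G := by
    apply Continuous.add
    · exact (continuous_const.mul ((hφ.continuous_deriv le_rfl).comp
        (continuous_const.mul hJcont))).mul ((continuous_apply 0).pow 2)
    · exact (hφ.continuous.comp (continuous_const.mul hJcont)).mul
        (hJcont.add ((continuous_const.mul ((continuous_apply 0).pow 2)).div hJcont
          fun y => (Real.sqrt_pos.mpr (hqpos y)).ne'))
  have hG0 : ∀ y : Fin 3 → ℝ, E₀ / (a * Real.sqrt γ) < ‖y‖ → G y = 0 := by
    intro y hy
    obtain ⟨i, hi⟩ : ∃ i, E₀ / (a * Real.sqrt γ) < |y i| := by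
      by_contra hcon
      push_neg at hcon
      exact absurd ((pi_norm_le_iff_of_nonneg (by positivity)).mpr
        (fun i => by simpa using hcon i)) (not_le.mpr hy)
    have h2 : Real.sqrt γ * |y i| ≤ Real.sqrt (1 + γ * ∑ j, y j ^ 2) :=
      sqrt_mul_abs_le_sqrt hγ (y i) _
        (Finset.single_le_sum (fun j _ => sq_nonneg (y j)) (Finset.mem_univ i))
    have h1 : E₀ < |y i| * (a * Real.sqrt γ) := (div_lt_iff₀ (by positivity)).mp hi
    have h3 : E₀ ≤ a * Real.sqrt (1 + γ * ∑ j, y j ^ 2) := by nlinarith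
    simp [hGdef, hφzero _ h3, hφd0 _ h3]
  have hGint : Integrable G := by
    apply hGcont.integrable_of_hasCompactSupport
    apply HasCompactSupport.intro (isCompact_closedBall (0 : Fin 3 → ℝ) (E₀ / (a * Real.sqrt γ)))
    intro y hy
    exact hG0 y (by simpa [dist_zero_right, not_le] using hy)
  have hmp := (measurePreserving_piFinSuccAbove (fun _ : Fin 3 => (volume : Measure ℝ)) 0).symm
  have hemb := (MeasurableEquiv.piFinSuccAbove (fun _ : Fin 3 => ℝ) 0).symm.measurableEmbedding
  have hGintpi : Integrable G (Measure.pi fun _ : Fin 3 => volume) := by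
    rwa [volume_pi] at hGint
  have hGint' : Integrable (G ∘ ⇑(MeasurableEquiv.piFinSuccAbove (fun _ : Fin 3 => ℝ) 0).symm)
      ((volume : Measure ℝ).prod (Measure.pi fun _ : Fin 2 => volume)) :=
    (hmp.integrable_comp_emb hemb).mpr hGintpi
  have hcomp : ∀ (t : ℝ) (y2 : Fin 2 → ℝ),
      G ((MeasurableEquiv.piFinSuccAbove (fun _ : Fin 3 => ℝ) 0).symm (t, y2))
        = a * γ * deriv φ (a * Real.sqrt (1 + γ * (t ^ 2 + ∑ i, y2 i ^ 2))) * t ^ 2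
          + φ (a * Real.sqrt (1 + γ * (t ^ 2 + ∑ i, y2 i ^ 2))) *
            (Real.sqrt (1 + γ * (t ^ 2 + ∑ i, y2 i ^ 2))
              + γ * t ^ 2 / Real.sqrt (1 + γ * (t ^ 2 + ∑ i, y2 i ^ 2))) := by
    intro t y2
    have he : ((MeasurableEquiv.piFinSuccAbove (fun _ : Fin 3 => ℝ) 0).symm (t, y2))
        = Fin.cons t y2 := by
      simp [MeasurableEquiv.piFinSuccAbove_symm_apply, Fin.insertNthEquiv, Fin.insertNth_zero]
    rw [hGdef, he]
    have h0 : (Fin.cons t y2 : Fin 3 → ℝ) 0 = t := rfl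
    have hsum : ∑ i : Fin 3, (Fin.cons t y2 : Fin 3 → ℝ) i ^ 2 = t ^ 2 + ∑ i : Fin 2, y2 i ^ 2 := by
      rw [Fin.sum_univ_succ]; simp
    simp only [h0, hsum]
  calc ∫ y : Fin 3 → ℝ, G y
      = ∫ y, G y ∂(Measure.pi fun _ : Fin 3 => volume) := by rw [← volume_pi]
    _ = ∫ p, (G ∘ ⇑(MeasurableEquiv.piFinSuccAbove (fun _ : Fin 3 => ℝ) 0).symm) p
          ∂((volume : Measure ℝ).prod (Measure.pi fun _ : Fin 2 => volume)) :=
        (hmp.integral_comp hemb G).symm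
    _ = ∫ y2 : Fin 2 → ℝ, (∫ t : ℝ,
          (G ∘ ⇑(MeasurableEquiv.piFinSuccAbove (fun _ : Fin 3 => ℝ) 0).symm) (t, y2))
          ∂(Measure.pi fun _ : Fin 2 => volume) := integral_prod_symm _ hGint'
    _ = 0 := by
        have hz : ∀ y2 : Fin 2 → ℝ, (∫ t : ℝ,
            (G ∘ ⇑(MeasurableEquiv.piFinSuccAbove (fun _ : Fin 3 => ℝ) 0).symm) (t, y2)) = 0 := by
          intro y2
          simp only [Function.comp_apply]
          simp_rw [hcomp]
          exact oneD hγ hE₀ hφ hφzero a _ ha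
            (Finset.sum_nonneg fun i _ => sq_nonneg _)
        simp_rw [hz]
        simp

lemma e3IBP {γ E₀ : ℝ} (hγ : 0 < γ) (hE₀ : 0 < E₀) {φ : ℝ → ℝ} (hφ : ContDiff ℝ 1 φ)
    (hφzero : ∀ s, E₀ ≤ s → φ s = 0)
    (a : ℝ) (ha : 0 < a) :
    ∫ v : E3, (a * γ * deriv φ (a * jap γ v) * v 0 ^ 2
      + φ (a * jap γ v) * (jap γ v + γ * v 0 ^ 2 / jap γ v)) = 0 := by
  have hmp := (EuclideanSpace.volume_preserving_symm_measurableEquiv_toLp (Fin 3)).symm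
  have hemb := (MeasurableEquiv.toLp 2 (Fin 3 → ℝ)).measurableEmbedding
  have h := hmp.integral_comp hemb (fun v : E3 => a * γ * deriv φ (a * jap γ v) * v 0 ^ 2
    + φ (a * jap γ v) * (jap γ v + γ * v 0 ^ 2 / jap γ v))
  rw [← h]
  have key : ∀ y : Fin 3 → ℝ,
      jap γ ((MeasurableEquiv.toLp 2 (Fin 3 → ℝ)) y) = Real.sqrt (1 + γ * ∑ i, y i ^ 2) :=
    fun y => by rw [jap_eq_sum]; rfl
  have key2 : ∀ y : Fin 3 → ℝ,
      ((MeasurableEquiv.toLp 2 (Fin 3 → ℝ)) y : E3) 0 = y 0 := fun y => rfl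
  simp only [MeasurableEquiv.symm_symm, key, key2]
  exact piIBP hγ hE₀ hφ hφzero a ha

lemma integrable_aux {γ E₀ a : ℝ} (hγ : 0 < γ) (ha : 0 < a)
    (g : E3 → ℝ) (hg : Continuous g)
    (h0 : ∀ v : E3, E₀ ≤ a * jap γ v → g v = 0) : Integrable g := by
  apply hg.integrable_of_hasCompactSupport
  apply HasCompactSupport.intro (isCompact_closedBall (0 : E3) (E₀ / (a * Real.sqrt γ)))
  intro v hv
  have hnv : E₀ / (a * Real.sqrt γ) < ‖v‖ := by
    simpa [dist_zero_right, not_le] using hv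
  apply h0
  have h2 : Real.sqrt γ * ‖v‖ ≤ jap γ v := by
    have := sqrt_mul_abs_le_sqrt hγ ‖v‖ (‖v‖ ^ 2) le_rfl
    rwa [abs_of_nonneg (norm_nonneg v)] at this
  have h1 : E₀ < ‖v‖ * (a * Real.sqrt γ) := (div_lt_iff₀ (by positivity)).mp hnv
  nlinarith

lemma algaux {a γ X P R : ℝ} (ha : a ≠ 0) (hγ : γ ≠ 0)
    (h : a * γ * X + (R + γ * P) = 0) : X = -(a⁻¹ / γ) * (γ * P + R) := by
  field_simp
  linear_combination h

lemma part1core {γ E₀ : ℝ} (hγ : 0 < γ) (hE₀ : 0 < E₀) {φ : ℝ → ℝ} (hφ : ContDiff ℝ 1 φ)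
    (hφzero : ∀ s, E₀ ≤ s → φ s = 0) (a : ℝ) (ha : 0 < a) :
    ∫ v : E3, deriv φ (a * jap γ v) * v 0 ^ 2
      = -(a⁻¹ / γ) * ((γ * ∫ v : E3, v 0 ^ 2 / jap γ v * φ (a * jap γ v))
          + ∫ v : E3, jap γ v * φ (a * jap γ v)) := by
  have hφd0 := deriv_phi_zero hφ hφzero
  have hjapc : Continuous (jap γ) :=
    (continuous_const.add (continuous_const.mul ((continuous_norm).pow 2))).sqrt
  have hv0 : Continuous fun v : E3 => v 0 := (EuclideanSpace.proj (0 : Fin 3)).continuous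
  have i1 : Integrable (fun v : E3 => deriv φ (a * jap γ v) * v 0 ^ 2) := by
    apply integrable_aux (E₀ := E₀) hγ ha
    · exact ((hφ.continuous_deriv le_rfl).comp (continuous_const.mul hjapc)).mul (hv0.pow 2)
    · intro v hv; simp [hφd0 _ hv]
  have i2 : Integrable (fun v : E3 => jap γ v * φ (a * jap γ v)) := by
    apply integrable_aux (E₀ := E₀) hγ ha
    · exact hjapc.mul (hφ.continuous.comp (continuous_const.mul hjapc))
    · intro v hv; simp [hφzero _ hv]
  have i3 : Integrable (fun v : E3 => v 0 ^ 2 / jap γ v * φ (a * jap γ v)) := by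
    apply integrable_aux (E₀ := E₀) hγ ha
    · exact ((hv0.pow 2).div hjapc fun v => (jap_pos hγ v).ne').mul
        (hφ.continuous.comp (continuous_const.mul hjapc))
    · intro v hv; simp [hφzero _ hv]
  have hkey := e3IBP hγ hE₀ hφ hφzero a ha
  have hre : (fun v : E3 => a * γ * deriv φ (a * jap γ v) * v 0 ^ 2
      + φ (a * jap γ v) * (jap γ v + γ * v 0 ^ 2 / jap γ v))
      = fun v : E3 => a * γ * (deriv φ (a * jap γ v) * v 0 ^ 2)
        + (jap γ v * φ (a * jap γ v) + γ * (v 0 ^ 2 / jap γ v * φ (a * jap γ v))) := by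
    funext v; ring
  have i1' : Integrable (fun v : E3 => a * γ * (deriv φ (a * jap γ v) * v 0 ^ 2)) := by
    exact i1.const_mul (a * γ)
  have i3' : Integrable (fun v : E3 => γ * (v 0 ^ 2 / jap γ v * φ (a * jap γ v))) := by
    exact i3.const_mul γ
  have i23 : Integrable (fun v : E3 => jap γ v * φ (a * jap γ v)
      + γ * (v 0 ^ 2 / jap γ v * φ (a * jap γ v))) := by
    exact i2.add i3'
  rw [hre, integral_add i1' i23, integral_add i2 i3', integral_const_mul,
    integral_const_mul] at hkey
  have ha' : a ≠ 0 := ha.ne'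
  have hγ' : γ ≠ 0 := hγ.ne'
  exact algaux ha' hγ' hkey


lemma dot3_eq_inner (x v : E3) : dot3 x v = inner ℝ x v := by
  simp [dot3, PiLp.inner_apply, RCLike.inner_apply, conj_trivial, mul_comm]

lemma rot {γ : ℝ} (g : ℝ → ℝ) (x : E3) (hx : x ≠ 0) :
    ∫ v : E3, g (jap γ v) * wrad x v ^ 2 = ∫ v : E3, g (jap γ v) * v 0 ^ 2 := by
  have hxn : ‖x‖ ≠ 0 := norm_ne_zero_iff.mpr hx
  obtain ⟨b, hb⟩ : ∃ b : OrthonormalBasis (Fin 3) ℝ E3, b 0 = ‖x‖⁻¹ • x := by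
    have hcard : Module.finrank ℝ E3 = Fintype.card (Fin 3) := by
      simp [finrank_euclideanSpace]
    have horth : Orthonormal ℝ (Set.restrict ({0} : Set (Fin 3)) (fun _ => ‖x‖⁻¹ • x)) := by
      constructor
      · intro i
        change ‖‖x‖⁻¹ • x‖ = 1
        rw [norm_smul, norm_inv, norm_norm, inv_mul_cancel₀ hxn]
      · intro i j hij
        exact absurd (Subsingleton.elim i j) hij
    obtain ⟨b, hb⟩ := horth.exists_orthonormalBasis_extension_of_card_eq hcard
    exact ⟨b, hb 0 rfl⟩
  have hmp := b.measurePreserving_repr_symm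
  have hemb : MeasurableEmbedding (⇑b.repr.symm) := b.repr.symm.toHomeomorph.measurableEmbedding
  rw [← hmp.integral_comp hemb (fun v : E3 => g (jap γ v) * wrad x v ^ 2)]
  congr 1
  funext v
  have hnorm : ‖(b.repr.symm v : E3)‖ = ‖v‖ := b.repr.symm.norm_map v
  have hjap : jap γ (b.repr.symm v) = jap γ v := by rw [jap, jap, hnorm]
  have hxeq : x = ‖x‖ • b 0 := by rw [hb, smul_smul, mul_inv_cancel₀ hxn, one_smul]
  have hinner : (inner ℝ x (b.repr.symm v) : ℝ) = ‖x‖ * v 0 := by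
    calc (inner ℝ x (b.repr.symm v) : ℝ)
        = inner ℝ (b.repr x) (b.repr (b.repr.symm v)) := (b.repr.inner_map_map _ _).symm
      _ = inner ℝ (b.repr x) v := by rw [LinearIsometryEquiv.apply_symm_apply]
      _ = ‖x‖ * v 0 := by
          have hrx : b.repr x = ‖x‖ • EuclideanSpace.single 0 (1:ℝ) := by
            conv_lhs => rw [hxeq]
            rw [b.repr.map_smul, b.repr_self]
          rw [hrx]
          simp [real_inner_smul_left, EuclideanSpace.inner_single_left]
  have hw : wrad x (b.repr.symm v) = v 0 := by
    rw [wrad, dot3_eq_inner, hinner]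
    field_simp
  rw [hjap, hw]

lemma norm_er : ‖(er : E3)‖ = 1 := by
  rw [er, EuclideanSpace.norm_single]
  simp

lemma norm_smul_er {r : ℝ} (hr : 0 ≤ r) : ‖(r • er : E3)‖ = r := by
  rw [norm_smul, norm_er, Real.norm_eq_abs, abs_of_nonneg hr, mul_one]

lemma wrad_er {r : ℝ} (hr : 0 < r) (v : E3) : wrad (r • er) v = v 0 := by
  rw [wrad, norm_smul_er hr.le, dot3]
  have hcomp : ∀ i : Fin 3, (r • er : E3) i = r * er i := fun i => rfl
  have her : ∀ i : Fin 3, (er : E3) i = if i = 0 then 1 else 0 := by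
    intro i
    rw [er, EuclideanSpace.single_apply]
  rw [Fin.sum_univ_three]
  simp only [hcomp, her]
  simp only [if_true, if_neg (by decide : ¬(1:Fin 3) = 0), if_neg (by decide : ¬(2:Fin 3) = 0)]
  field_simp
  ring

lemma rho0_eq (γ : ℝ) (mu0 φ : ℝ → ℝ) {r : ℝ} (hr : 0 ≤ r) :
    rho0 γ mu0 φ r = ∫ v : E3, jap γ v * φ (Real.exp (mu0 r) * jap γ v) := by
  unfold rho0 f0 energy
  congr 1
  funext v
  rw [show ‖(r • er, v).1‖ = r from norm_smul_er hr]

lemma p0_eq (γ : ℝ) (mu0 φ : ℝ → ℝ) {r : ℝ} (hr : 0 < r) :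
    p0 γ mu0 φ r = ∫ v : E3, v 0 ^ 2 / jap γ v * φ (Real.exp (mu0 r) * jap γ v) := by
  unfold p0 f0 energy
  congr 1
  funext v
  rw [wrad_er hr, show ‖(r • er, v).1‖ = r from norm_smul_er hr.le]


/-- `∫ φ'(E) w² dv = −(e^{−μ₀}/γ)(γp₀+ρ₀)`, and under the static
Einstein field equations this also equals `−(e^{−2λ₀−μ₀}/(4πγ²r))(λ₀'+μ₀')`. -/
theorem integral_phi_prime_w_sq
    (γ : ℝ) (hγ : 0 < γ)
    (mu0 : ℝ → ℝ)
    (E₀ : ℝ) (hE₀ : 0 < E₀)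
    (φ : ℝ → ℝ) (hφ : ContDiff ℝ 1 φ)
    (hφzero : ∀ s, E₀ ≤ s → φ s = 0)
    (hφdec : ∀ s, s < E₀ → deriv φ s < 0) :
    (∀ x : E3, x ≠ 0 →
      ∫ v : E3, deriv φ (energy γ mu0 (x, v)) * (wrad x v) ^ 2 =
        -(Real.exp (-mu0 ‖x‖) / γ) * (γ * p0 γ mu0 φ ‖x‖ + rho0 γ mu0 φ ‖x‖)) ∧
    (∀ lam0 : ℝ → ℝ, ContDiff ℝ 1 lam0 → ContDiff ℝ 1 mu0 →
      FieldEqs γ lam0 mu0 φ →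
      ∀ x : E3, x ≠ 0 →
        ∫ v : E3, deriv φ (energy γ mu0 (x, v)) * (wrad x v) ^ 2 =
          -(Real.exp (-2 * lam0 ‖x‖ - mu0 ‖x‖) / (4 * π * γ ^ 2 * ‖x‖)) *
            (deriv lam0 ‖x‖ + deriv mu0 ‖x‖)) := by
  have part1 : ∀ x : E3, x ≠ 0 →
      ∫ v : E3, deriv φ (energy γ mu0 (x, v)) * (wrad x v) ^ 2 =
        -(Real.exp (-mu0 ‖x‖) / γ) * (γ * p0 γ mu0 φ ‖x‖ + rho0 γ mu0 φ ‖x‖) := by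
    intro x hx
    have hr : 0 < ‖x‖ := norm_pos_iff.mpr hx
    set a := Real.exp (mu0 ‖x‖) with had
    have ha : 0 < a := Real.exp_pos _
    calc ∫ v : E3, deriv φ (energy γ mu0 (x, v)) * wrad x v ^ 2
        = ∫ v : E3, (fun s => deriv φ (a * s)) (jap γ v) * wrad x v ^ 2 := rfl
      _ = ∫ v : E3, (fun s => deriv φ (a * s)) (jap γ v) * v 0 ^ 2 := rot (γ := γ) (fun s => deriv φ (a * s)) x hx
      _ = -(a⁻¹ / γ) * ((γ * ∫ v : E3, v 0 ^ 2 / jap γ v * φ (a * jap γ v))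
            + ∫ v : E3, jap γ v * φ (a * jap γ v)) := part1core hγ hE₀ hφ hφzero a ha
      _ = -(Real.exp (-mu0 ‖x‖) / γ) * (γ * p0 γ mu0 φ ‖x‖ + rho0 γ mu0 φ ‖x‖) := by
          rw [p0_eq γ mu0 φ hr, rho0_eq γ mu0 φ hr.le, Real.exp_neg]
  refine ⟨part1, ?_⟩
  intro lam0 hlam hmu hfe x hx
  have hr : 0 < ‖x‖ := norm_pos_iff.mpr hx
  obtain ⟨h1, h2⟩ := hfe
  have e1 := h1 ‖x‖ hr
  have e2 := h2 ‖x‖ hr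
  rw [part1 x hx]
  have hπ : (0:ℝ) < π := Real.pi_pos
  have hsum2 : Real.exp (-2 * lam0 ‖x‖) * (deriv lam0 ‖x‖ + deriv mu0 ‖x‖)
      = 4 * π * γ * ‖x‖ * (rho0 γ mu0 φ ‖x‖ + γ * p0 γ mu0 φ ‖x‖) := by
    apply mul_left_cancel₀ (a := 2 * ‖x‖) (by positivity)
    linear_combination e1 + e2
  have hexp : Real.exp (-2 * lam0 ‖x‖ - mu0 ‖x‖)
      = Real.exp (-2 * lam0 ‖x‖) * Real.exp (-mu0 ‖x‖) := by
    rw [← Real.exp_add]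
    ring_nf
  rw [hexp]
  have hγ' : γ ≠ 0 := hγ.ne'
  have hπ' : π ≠ 0 := hπ.ne'
  have hr' : ‖x‖ ≠ 0 := hr.ne'
  set L := Real.exp (-2 * lam0 ‖x‖) with hL
  set M := Real.exp (-mu0 ‖x‖) with hM
  field_simp
  linear_combination M * hsum2
end
end

section
/- For every spherically symmetric continuous function h on ℝ⁶ and every x ∈ ℝ³∖{0} (r=|x|), ( ∫_{ℝ³} |φ'(E(x,v))| w h(x,v) dv )² ≤ (e^{−2λ₀(r)−μ₀(r)}/(4πγ²r)) (λ₀'(r)+μ₀'(r)) ∫_{ℝ³} |φ'(E(x,v))| h(x,v)² dv. -/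
noncomputable section

open Real MeasureTheory

lemma integral_cauchy_schwarz' {α : Type*} [MeasurableSpace α] (μ : Measure α)
    (f g : α → ℝ) (hf : Integrable (fun a => f a ^ 2) μ)
    (hg : Integrable (fun a => g a ^ 2) μ) (hfg : Integrable (fun a => f a * g a) μ) :
    (∫ a, f a * g a ∂μ) ^ 2 ≤ (∫ a, f a ^ 2 ∂μ) * ∫ a, g a ^ 2 ∂μ := by
  set A := ∫ a, f a ^ 2 ∂μ with hA
  set B := ∫ a, g a ^ 2 ∂μ with hB
  set C := ∫ a, f a * g a ∂μ with hC
  have key : ∀ t : ℝ, 0 ≤ A * (t * t) + (2 * C) * t + B := by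
    intro t
    have h0 : 0 ≤ ∫ a, (t * f a + g a) ^ 2 ∂μ := integral_nonneg fun a => sq_nonneg _
    have hexp : (fun a => (t * f a + g a) ^ 2)
        = fun a => (t * t) * f a ^ 2 + ((2 * t) * (f a * g a) + g a ^ 2) := by
      funext a; ring
    have hadd : Integrable (fun a => (2*t) * (f a * g a) + g a ^ 2) μ :=
      (hfg.const_mul (2*t)).add hg
    rw [hexp, integral_add (hf.const_mul (t*t)) hadd,
      integral_add (hfg.const_mul (2*t)) hg,
      integral_const_mul, integral_const_mul] at h0
    rw [← hA, ← hB, ← hC] at h0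
    nlinarith [h0]
  have hd := discrim_le_zero key
  rw [discrim] at hd
  nlinarith [hd]

lemma integral_deriv_eq_zero'' {f : ℝ → ℝ} (hf : ContDiff ℝ 1 f) (h2f : HasCompactSupport f) :
    ∫ t, deriv f t = 0 := by
  have hi : Integrable (deriv f) :=
    (hf.continuous_deriv le_rfl).integrable_of_hasCompactSupport h2f.deriv
  rw [← intervalIntegral.integral_Iic_add_Ioi (b := (0:ℝ)) hi.integrableOn hi.integrableOn,
    HasCompactSupport.integral_Iic_deriv_eq hf h2f 0,
    HasCompactSupport.integral_Ioi_deriv_eq hf h2f 0]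
  ring

lemma sqrt_hasDerivAt (γ c t : ℝ) (hγ : 0 < γ) (hc : 0 < c) :
    HasDerivAt (fun t : ℝ => Real.sqrt (c + γ * t ^ 2)) (γ * t / Real.sqrt (c + γ * t ^ 2)) t := by
  have hpos : 0 < c + γ * t ^ 2 := by nlinarith [sq_nonneg t]
  have h1 : HasDerivAt (fun t : ℝ => c + γ * t ^ 2) (γ * (2 * t)) t := by
    simpa using (((hasDerivAt_pow 2 t).const_mul γ).const_add c)
  have h2 := (Real.hasDerivAt_sqrt hpos.ne').comp t h1
  refine h2.congr_deriv ?_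
  symm
  have hs : Real.sqrt (c + γ * t ^ 2) ≠ 0 := (Real.sqrt_pos.mpr hpos).ne'
  field_simp

lemma F_hasDerivAt (γ c eμ : ℝ) (hγ : 0 < γ) (hc : 0 < c) (φ : ℝ → ℝ) (hφ : ContDiff ℝ 1 φ)
    (t : ℝ) :
    HasDerivAt (fun t : ℝ => φ (eμ * Real.sqrt (c + γ * t ^ 2)) * (t * Real.sqrt (c + γ * t ^ 2)))
      (γ * eμ * deriv φ (eμ * Real.sqrt (c + γ * t ^ 2)) * t ^ 2
        + (φ (eμ * Real.sqrt (c + γ * t ^ 2)) * Real.sqrt (c + γ * t ^ 2)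
          + γ * φ (eμ * Real.sqrt (c + γ * t ^ 2)) * (t ^ 2 / Real.sqrt (c + γ * t ^ 2)))) t := by
  have hs := sqrt_hasDerivAt γ c t hγ hc
  have hφd : HasDerivAt φ (deriv φ (eμ * Real.sqrt (c + γ * t ^ 2)))
      (eμ * Real.sqrt (c + γ * t ^ 2)) :=
    (hφ.differentiable one_ne_zero _).hasDerivAt
  have h1 : HasDerivAt (fun t : ℝ => φ (eμ * Real.sqrt (c + γ * t ^ 2)))
      (deriv φ (eμ * Real.sqrt (c + γ * t ^ 2)) * (eμ * (γ * t / Real.sqrt (c + γ * t ^ 2)))) t :=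
    hφd.comp t (hs.const_mul eμ)
  have h2 : HasDerivAt (fun t : ℝ => t * Real.sqrt (c + γ * t ^ 2))
      (1 * Real.sqrt (c + γ * t ^ 2) + t * (γ * t / Real.sqrt (c + γ * t ^ 2))) t :=
    (hasDerivAt_id t).mul hs
  have h3 := h1.mul h2
  refine h3.congr_deriv ?_
  symm
  have hpos : 0 < c + γ * t ^ 2 := by nlinarith [sq_nonneg t]
  have hsne : Real.sqrt (c + γ * t ^ 2) ≠ 0 := (Real.sqrt_pos.mpr hpos).ne'
  have hsq : Real.sqrt (c + γ * t ^ 2) * Real.sqrt (c + γ * t ^ 2) = c + γ * t ^ 2 :=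
    Real.mul_self_sqrt hpos.le
  field_simp

lemma inner_int_zero (γ c eμ R : ℝ) (hγ : 0 < γ) (hc : 1 ≤ c) (hR : 0 < R)
    (φ : ℝ → ℝ) (hφ : ContDiff ℝ 1 φ)
    (hbig : ∀ m : ℝ, R ^ 2 ≤ m →
      φ (eμ * Real.sqrt (1 + γ * m)) = 0 ∧ deriv φ (eμ * Real.sqrt (1 + γ * m)) = 0) :
    ∫ t : ℝ, (γ * eμ * deriv φ (eμ * Real.sqrt (c + γ * t ^ 2)) * t ^ 2
      + (φ (eμ * Real.sqrt (c + γ * t ^ 2)) * Real.sqrt (c + γ * t ^ 2)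
        + γ * φ (eμ * Real.sqrt (c + γ * t ^ 2)) * (t ^ 2 / Real.sqrt (c + γ * t ^ 2)))) = 0 := by
  have hc0 : (0:ℝ) < c := lt_of_lt_of_le one_pos hc
  set F : ℝ → ℝ := fun t => φ (eμ * Real.sqrt (c + γ * t ^ 2)) * (t * Real.sqrt (c + γ * t ^ 2))
    with hFdef
  have hvanF : ∀ t : ℝ, R ≤ |t| → φ (eμ * Real.sqrt (c + γ * t ^ 2)) = 0
      ∧ deriv φ (eμ * Real.sqrt (c + γ * t ^ 2)) = 0 := by
    intro t ht
    have hm : R ^ 2 ≤ (c - 1) / γ + t ^ 2 := by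
      have h1 : R ^ 2 ≤ t ^ 2 := by nlinarith [abs_nonneg t, sq_abs t]
      have h2 : 0 ≤ (c - 1) / γ := div_nonneg (by linarith) hγ.le
      linarith
    have harg : c + γ * t ^ 2 = 1 + γ * ((c - 1) / γ + t ^ 2) := by field_simp; ring
    have := hbig _ hm
    rwa [← harg] at this
  have hsqc : ContDiff ℝ 1 (fun t : ℝ => Real.sqrt (c + γ * t ^ 2)) := by
    rw [contDiff_iff_contDiffAt]
    intro t
    have hpos : 0 < c + γ * t ^ 2 := by nlinarith [sq_nonneg t]
    exact (Real.contDiffAt_sqrt hpos.ne').comp t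
      ((contDiff_const.add (contDiff_const.mul (contDiff_id.pow 2))).contDiffAt)
  have hF : ContDiff ℝ 1 F :=
    (hφ.comp (contDiff_const.mul hsqc)).mul (contDiff_id.mul hsqc)
  have hsupp : HasCompactSupport F := by
    apply HasCompactSupport.intro (isCompact_Icc (a := -R) (b := R))
    intro t ht
    have habs : R ≤ |t| := by
      rw [Set.mem_Icc, ← abs_le] at ht
      exact (not_le.mp ht).le
    simp [hFdef, (hvanF t habs).1]
  have hder : ∀ t : ℝ, deriv F t = γ * eμ * deriv φ (eμ * Real.sqrt (c + γ * t ^ 2)) * t ^ 2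
      + (φ (eμ * Real.sqrt (c + γ * t ^ 2)) * Real.sqrt (c + γ * t ^ 2)
        + γ * φ (eμ * Real.sqrt (c + γ * t ^ 2)) * (t ^ 2 / Real.sqrt (c + γ * t ^ 2))) :=
    fun t => (F_hasDerivAt γ c eμ hγ hc0 φ hφ t).deriv
  calc ∫ t : ℝ, (γ * eμ * deriv φ (eμ * Real.sqrt (c + γ * t ^ 2)) * t ^ 2
      + (φ (eμ * Real.sqrt (c + γ * t ^ 2)) * Real.sqrt (c + γ * t ^ 2)
        + γ * φ (eμ * Real.sqrt (c + γ * t ^ 2)) * (t ^ 2 / Real.sqrt (c + γ * t ^ 2))))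
      = ∫ t : ℝ, deriv F t := by
        congr 1; funext t; rw [hder t]
    _ = 0 := integral_deriv_eq_zero'' hF hsupp

lemma prod_int_zero (γ eμ R : ℝ) (hγ : 0 < γ) (hR : 0 < R)
    (φ : ℝ → ℝ) (hφ : ContDiff ℝ 1 φ)
    (hbig : ∀ m : ℝ, R ^ 2 ≤ m →
      φ (eμ * Real.sqrt (1 + γ * m)) = 0 ∧ deriv φ (eμ * Real.sqrt (1 + γ * m)) = 0) :
    ∫ z : ℝ × (Fin 2 → ℝ),
      (γ * eμ * deriv φ (eμ * Real.sqrt (1 + γ * (z.1 ^ 2 + ∑ j, z.2 j ^ 2))) * z.1 ^ 2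
        + (φ (eμ * Real.sqrt (1 + γ * (z.1 ^ 2 + ∑ j, z.2 j ^ 2)))
            * Real.sqrt (1 + γ * (z.1 ^ 2 + ∑ j, z.2 j ^ 2))
          + γ * φ (eμ * Real.sqrt (1 + γ * (z.1 ^ 2 + ∑ j, z.2 j ^ 2)))
            * (z.1 ^ 2 / Real.sqrt (1 + γ * (z.1 ^ 2 + ∑ j, z.2 j ^ 2))))) = 0 := by
  set Q : ℝ × (Fin 2 → ℝ) → ℝ := fun z => 1 + γ * (z.1 ^ 2 + ∑ j, z.2 j ^ 2) with hQdef
  have hQnonneg : ∀ z, 0 < Q z := by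
    intro z
    have h1 : 0 ≤ ∑ j, z.2 j ^ 2 := Finset.sum_nonneg fun j _ => sq_nonneg _
    have h2 : 0 ≤ z.1 ^ 2 := sq_nonneg _
    have : 0 ≤ γ * (z.1 ^ 2 + ∑ j, z.2 j ^ 2) := by positivity
    simp only [hQdef]; linarith
  have hQc : Continuous Q := by
    apply continuous_const.add (continuous_const.mul ?_)
    exact ((continuous_fst.pow 2).add
      (continuous_finset_sum _ fun j _ => ((continuous_apply j).comp continuous_snd).pow 2))
  have hsqQ : Continuous fun z => Real.sqrt (Q z) := Real.continuous_sqrt.comp hQc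
  have hsqQne : ∀ z, Real.sqrt (Q z) ≠ 0 := fun z => (Real.sqrt_pos.mpr (hQnonneg z)).ne'
  set D2 : ℝ × (Fin 2 → ℝ) → ℝ := fun z =>
    γ * eμ * deriv φ (eμ * Real.sqrt (Q z)) * z.1 ^ 2
      + (φ (eμ * Real.sqrt (Q z)) * Real.sqrt (Q z)
        + γ * φ (eμ * Real.sqrt (Q z)) * (z.1 ^ 2 / Real.sqrt (Q z))) with hD2def
  have hcont : Continuous D2 := by
    have hφc : Continuous fun z => φ (eμ * Real.sqrt (Q z)) :=
      hφ.continuous.comp (continuous_const.mul hsqQ)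
    have hφ'c : Continuous fun z => deriv φ (eμ * Real.sqrt (Q z)) :=
      (hφ.continuous_deriv le_rfl).comp (continuous_const.mul hsqQ)
    exact ((continuous_const.mul hφ'c).mul (continuous_fst.pow 2)).add
      ((hφc.mul hsqQ).add ((continuous_const.mul hφc).mul
        (((continuous_fst.pow 2).div hsqQ hsqQne))))
  have hsupp : HasCompactSupport D2 := by
    apply HasCompactSupport.intro
      ((isCompact_Icc (a := -R) (b := R)).prod (isCompact_closedBall (0 : Fin 2 → ℝ) R))
    intro z hz
    have hm : R ^ 2 ≤ z.1 ^ 2 + ∑ j, z.2 j ^ 2 := by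
      have hsum : 0 ≤ ∑ j, z.2 j ^ 2 := Finset.sum_nonneg fun j _ => sq_nonneg _
      rw [Set.mem_prod, not_and_or] at hz
      rcases hz with h | h
      · have : R < |z.1| := by
          rw [Set.mem_Icc, ← abs_le] at h
          exact not_le.mp h
        nlinarith [sq_abs z.1, sq_nonneg z.1]
      · have : R < ‖z.2‖ := by
          rw [Metric.mem_closedBall, dist_zero_right] at h
          exact not_le.mp h
        have hex : ∃ j, R < |z.2 j| := by
          by_contra hcon
          push_neg at hcon
          have : ‖z.2‖ ≤ R := by
            apply pi_norm_le_iff_of_nonneg hR.le |>.mpr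
            intro j
            rw [Real.norm_eq_abs]
            exact hcon j
          linarith
        obtain ⟨j, hj⟩ := hex
        have h1 : (z.2 j) ^ 2 ≤ ∑ i, z.2 i ^ 2 :=
          Finset.single_le_sum (f := fun i => z.2 i ^ 2) (fun i _ => sq_nonneg _)
            (Finset.mem_univ j)
        nlinarith [sq_abs (z.2 j), sq_nonneg z.1]
    have h0 := hbig _ hm
    simp only [hD2def, hQdef]
    rw [h0.1, h0.2]
    ring
  have hint : Integrable D2 := hcont.integrable_of_hasCompactSupport hsupp
  have : ∫ z, D2 z = 0 := by
    rw [MeasureTheory.Measure.volume_eq_prod] at hint ⊢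
    rw [MeasureTheory.integral_prod_symm _ hint]
    have hin : ∀ u : Fin 2 → ℝ, (∫ t : ℝ, D2 (t, u)) = 0 := by
      intro u
      have hc : (1:ℝ) ≤ 1 + γ * ∑ j, u j ^ 2 := by
        have h1 : 0 ≤ ∑ j, u j ^ 2 := Finset.sum_nonneg fun j _ => sq_nonneg _
        nlinarith
      have harg : ∀ t : ℝ, Q (t, u) = (1 + γ * ∑ j, u j ^ 2) + γ * t ^ 2 := by
        intro t; simp only [hQdef]; ring
      simp only [hD2def, harg]
      exact inner_int_zero γ _ eμ R hγ hc hR φ hφ hbig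
    simp only [hin, integral_zero]
  exact this

lemma ibp_zero (γ eμ R : ℝ) (hγ : 0 < γ) (hR : 0 < R)
    (φ : ℝ → ℝ) (hφ : ContDiff ℝ 1 φ)
    (hbig : ∀ m : ℝ, R ^ 2 ≤ m →
      φ (eμ * Real.sqrt (1 + γ * m)) = 0 ∧ deriv φ (eμ * Real.sqrt (1 + γ * m)) = 0) :
    ∫ v : E3, (γ * eμ * deriv φ (eμ * jap γ v) * (v 0) ^ 2
      + (φ (eμ * jap γ v) * jap γ v + γ * φ (eμ * jap γ v) * ((v 0) ^ 2 / jap γ v))) = 0 := by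
  set Dc : (Fin 3 → ℝ) → ℝ := fun y =>
    γ * eμ * deriv φ (eμ * Real.sqrt (1 + γ * ∑ i, y i ^ 2)) * (y 0) ^ 2
      + (φ (eμ * Real.sqrt (1 + γ * ∑ i, y i ^ 2)) * Real.sqrt (1 + γ * ∑ i, y i ^ 2)
        + γ * φ (eμ * Real.sqrt (1 + γ * ∑ i, y i ^ 2))
          * ((y 0) ^ 2 / Real.sqrt (1 + γ * ∑ i, y i ^ 2))) with hDcdef
  have hnorm : ∀ v : E3, ‖v‖ ^ 2 = ∑ i, (v i) ^ 2 := by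
    intro v
    rw [EuclideanSpace.norm_eq, Real.sq_sqrt (Finset.sum_nonneg fun i _ => sq_nonneg _)]
    simp [Real.norm_eq_abs, sq_abs]
  have step1 : (∫ v : E3, (γ * eμ * deriv φ (eμ * jap γ v) * (v 0) ^ 2
      + (φ (eμ * jap γ v) * jap γ v + γ * φ (eμ * jap γ v) * ((v 0) ^ 2 / jap γ v))))
      = ∫ y : Fin 3 → ℝ, Dc y := by
    rw [← (EuclideanSpace.volume_preserving_symm_measurableEquiv_toLp (Fin 3)).integral_comp' Dc]
    congr 1
    funext v
    have hcoord : ∀ i, (MeasurableEquiv.toLp 2 (Fin 3 → ℝ)).symm v i = v i := fun _ => rfl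
    simp only [hDcdef, hcoord, jap, ← hnorm v]
  have step2 : (∫ y : Fin 3 → ℝ, Dc y) = 0 := by
    have e2 := (measurePreserving_piFinSuccAbove (fun _ : Fin 3 => (volume : Measure ℝ)) 0).symm
    rw [volume_pi, ← e2.integral_comp']
    have key : ∀ z : ℝ × (Fin 2 → ℝ),
        Dc ((MeasurableEquiv.piFinSuccAbove (fun _ : Fin 3 => ℝ) 0).symm z)
        = γ * eμ * deriv φ (eμ * Real.sqrt (1 + γ * (z.1 ^ 2 + ∑ j, z.2 j ^ 2))) * z.1 ^ 2
          + (φ (eμ * Real.sqrt (1 + γ * (z.1 ^ 2 + ∑ j, z.2 j ^ 2)))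
              * Real.sqrt (1 + γ * (z.1 ^ 2 + ∑ j, z.2 j ^ 2))
            + γ * φ (eμ * Real.sqrt (1 + γ * (z.1 ^ 2 + ∑ j, z.2 j ^ 2)))
              * (z.1 ^ 2 / Real.sqrt (1 + γ * (z.1 ^ 2 + ∑ j, z.2 j ^ 2)))) := by
      intro z
      have happ : (MeasurableEquiv.piFinSuccAbove (fun _ : Fin 3 => ℝ) 0).symm z
          = Fin.cons z.1 z.2 := by
        simp [MeasurableEquiv.piFinSuccAbove_symm_apply, Fin.insertNthEquiv, Fin.insertNth_zero,
          Fin.zero_succAbove]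
      rw [happ]
      have hsum : ∑ i : Fin 3, (Fin.cons z.1 z.2 : Fin 3 → ℝ) i ^ 2
          = z.1 ^ 2 + ∑ j : Fin 2, z.2 j ^ 2 := by
        rw [Fin.sum_univ_succ]
        simp [Fin.cons_zero, Fin.cons_succ]
      simp only [hDcdef, hsum, Fin.cons_zero]
    calc (∫ z : ℝ × (Fin 2 → ℝ),
          Dc ((MeasurableEquiv.piFinSuccAbove (fun _ : Fin 3 => ℝ) 0).symm z)
          ∂((volume : Measure ℝ).prod (Measure.pi fun _ => (volume : Measure ℝ))))
        = ∫ z : ℝ × (Fin 2 → ℝ),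
          Dc ((MeasurableEquiv.piFinSuccAbove (fun _ : Fin 3 => ℝ) 0).symm z) := by
          rw [← MeasureTheory.volume_pi, ← MeasureTheory.Measure.volume_eq_prod]
      _ = 0 := by
          simp only [key]
          exact prod_int_zero γ eμ R hγ hR φ hφ hbig
  rw [step1, step2]
/-- Lemma 4.3. The weighted Cauchy--Schwarz estimate
`(∫ |φ'(E)| w h dv)² ≤ (e^{−2λ₀−μ₀}/(4πγ²r))(λ₀'+μ₀') ∫ |φ'(E)| h² dv`. -/
theorem weighted_cauchy_schwarz
    (γ : ℝ) (hγ : 0 < γ)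
    (lam0 mu0 : ℝ → ℝ) (hlam0 : ContDiff ℝ 1 lam0) (hmu0 : ContDiff ℝ 1 mu0)
    (E₀ : ℝ) (hE₀ : 0 < E₀)
    (φ : ℝ → ℝ) (hφ : ContDiff ℝ 1 φ)
    (hφzero : ∀ s, E₀ ≤ s → φ s = 0)
    (hφdec : ∀ s, s < E₀ → deriv φ s < 0)
    (hfe : FieldEqs γ lam0 mu0 φ)
    (h : E3 × E3 → ℝ) (hh : Continuous h) (hsym : SphSym h)
    (x : E3) (hx : x ≠ 0) :
    (∫ v : E3, |deriv φ (energy γ mu0 (x, v))| * wrad x v * h (x, v)) ^ 2 ≤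
      (Real.exp (-2 * lam0 ‖x‖ - mu0 ‖x‖) / (4 * π * γ ^ 2 * ‖x‖)) *
        (deriv lam0 ‖x‖ + deriv mu0 ‖x‖) *
        ∫ v : E3, |deriv φ (energy γ mu0 (x, v))| * (h (x, v)) ^ 2 := by
  classical
  set r := ‖x‖ with hrdef
  have hr : 0 < r := norm_pos_iff.mpr hx
  set eμ := Real.exp (mu0 r) with heμdef
  have heμ : 0 < eμ := Real.exp_pos _
  have hEv : ∀ v : E3, energy γ mu0 (x, v) = eμ * jap γ v := fun v => rfl
  simp only [hEv]
  -- derivative of φ vanishes above E₀ and is nonpositive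
  have hφ' : Continuous (deriv φ) := hφ.continuous_deriv le_rfl
  have hopen : ∀ s, E₀ < s → deriv φ s = 0 := by
    intro s hs
    have hev : φ =ᶠ[nhds s] fun _ => (0:ℝ) := by
      filter_upwards [Ioi_mem_nhds hs] with t ht
      exact hφzero t ht.le
    rw [hev.deriv_eq]
    simp
  have hd0 : ∀ s, E₀ ≤ s → deriv φ s = 0 := by
    intro s hs
    rcases eq_or_lt_of_le hs with heq | hlt
    · rw [← heq]
      have h1 : Filter.Tendsto (deriv φ) (nhdsWithin E₀ (Set.Ioi E₀)) (nhds (deriv φ E₀)) :=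
        (hφ'.tendsto E₀).mono_left nhdsWithin_le_nhds
      have h2 : Filter.Tendsto (deriv φ) (nhdsWithin E₀ (Set.Ioi E₀)) (nhds 0) := by
        apply Filter.Tendsto.congr' _ tendsto_const_nhds
        filter_upwards [self_mem_nhdsWithin] with t ht
        exact (hopen t ht).symm
      exact tendsto_nhds_unique h1 h2
    · exact hopen s hlt
  have hdnp : ∀ s, deriv φ s ≤ 0 := by
    intro s
    rcases lt_or_ge s E₀ with hlt | hge
    · exact (hφdec s hlt).le
    · rw [hd0 s hge]
  -- the support radius
  set R := E₀ * Real.exp (-(mu0 r)) / Real.sqrt γ with hRdef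
  have hsγ : 0 < Real.sqrt γ := Real.sqrt_pos.mpr hγ
  have hRpos : 0 < R := div_pos (mul_pos hE₀ (Real.exp_pos _)) hsγ
  have hEbig : ∀ m : ℝ, R ^ 2 ≤ m → E₀ ≤ eμ * Real.sqrt (1 + γ * m) := by
    intro m hm
    have hm0 : 0 ≤ m := le_trans (sq_nonneg R) hm
    have h1 : Real.sqrt (γ * R ^ 2) ≤ Real.sqrt (1 + γ * m) :=
      Real.sqrt_le_sqrt (by nlinarith)
    have h2 : Real.sqrt (γ * R ^ 2) = Real.sqrt γ * R := by
      rw [Real.sqrt_mul hγ.le, Real.sqrt_sq hRpos.le]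
    have h3 : eμ * (Real.sqrt γ * R) = E₀ := by
      rw [hRdef, heμdef, Real.exp_neg]
      field_simp
    calc E₀ = eμ * (Real.sqrt γ * R) := h3.symm
      _ = eμ * Real.sqrt (γ * R ^ 2) := by rw [h2]
      _ ≤ eμ * Real.sqrt (1 + γ * m) := mul_le_mul_of_nonneg_left h1 heμ.le
  have hbig : ∀ m : ℝ, R ^ 2 ≤ m →
      φ (eμ * Real.sqrt (1 + γ * m)) = 0 ∧ deriv φ (eμ * Real.sqrt (1 + γ * m)) = 0 :=
    fun m hm => ⟨hφzero _ (hEbig m hm), hd0 _ (hEbig m hm)⟩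
  -- positivity and continuity facts
  have hjap_pos : ∀ v : E3, 0 < jap γ v := fun v =>
    Real.sqrt_pos.mpr (add_pos_of_pos_of_nonneg one_pos (mul_nonneg hγ.le (sq_nonneg _)))
  have hvan : ∀ v : E3, R ≤ ‖v‖ →
      φ (eμ * jap γ v) = 0 ∧ deriv φ (eμ * jap γ v) = 0 := by
    intro v hv
    have hsq : R ^ 2 ≤ ‖v‖ ^ 2 := by nlinarith [norm_nonneg v]
    exact hbig _ hsq
  have hjc : Continuous (jap γ) := by
    apply Real.continuous_sqrt.comp
    exact continuous_const.add (continuous_const.mul (continuous_norm.pow 2))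
  have hφE : Continuous fun v : E3 => φ (eμ * jap γ v) :=
    hφ.continuous.comp (continuous_const.mul hjc)
  have hdφE : Continuous fun v : E3 => deriv φ (eμ * jap γ v) :=
    hφ'.comp (continuous_const.mul hjc)
  have hproj : ∀ i : Fin 3, Continuous fun v : E3 => v i := fun i =>
    (EuclideanSpace.proj i : E3 →L[ℝ] ℝ).continuous
  have hwc : Continuous (wrad x) := by
    unfold wrad dot3
    apply Continuous.div_const
    exact continuous_finset_sum _ fun i _ => continuous_const.mul (hproj i)
  have hhc : Continuous fun v : E3 => h (x, v) :=
    hh.comp (continuous_const.prodMk continuous_id)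
  -- integrability helper
  have hInt : ∀ F : E3 → ℝ, Continuous F → (∀ v, R ≤ ‖v‖ → F v = 0) → Integrable F := by
    intro F hFc hF0
    apply hFc.integrable_of_hasCompactSupport
    apply HasCompactSupport.intro (isCompact_closedBall (0 : E3) R)
    intro v hv
    apply hF0
    have : R < ‖v‖ := by
      rw [Metric.mem_closedBall, dist_zero_right] at hv
      exact not_le.mp hv
    exact this.le
  have hI1 : Integrable fun v : E3 => |deriv φ (eμ * jap γ v)| * wrad x v * h (x, v) :=
    hInt _ ((hdφE.abs.mul hwc).mul hhc) fun v hv => by rw [(hvan v hv).2]; simp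
  have hI2 : Integrable fun v : E3 => |deriv φ (eμ * jap γ v)| * (wrad x v) ^ 2 :=
    hInt _ (hdφE.abs.mul (hwc.pow 2)) fun v hv => by rw [(hvan v hv).2]; simp
  have hI3 : Integrable fun v : E3 => |deriv φ (eμ * jap γ v)| * (h (x, v)) ^ 2 :=
    hInt _ (hdφE.abs.mul (hhc.pow 2)) fun v hv => by rw [(hvan v hv).2]; simp
  -- Cauchy–Schwarz
  set f : E3 → ℝ := fun v => Real.sqrt |deriv φ (eμ * jap γ v)| * wrad x v with hfdef
  set g : E3 → ℝ := fun v => Real.sqrt |deriv φ (eμ * jap γ v)| * h (x, v) with hgdef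
  have hc1 : (fun v => f v ^ 2) = fun v : E3 => |deriv φ (eμ * jap γ v)| * (wrad x v) ^ 2 := by
    funext v
    rw [hfdef, mul_pow, Real.sq_sqrt (abs_nonneg _)]
  have hc2 : (fun v => g v ^ 2) = fun v : E3 => |deriv φ (eμ * jap γ v)| * (h (x, v)) ^ 2 := by
    funext v
    rw [hgdef, mul_pow, Real.sq_sqrt (abs_nonneg _)]
  have hc3 : (fun v => f v * g v)
      = fun v : E3 => |deriv φ (eμ * jap γ v)| * wrad x v * h (x, v) := by
    funext v
    have hms := Real.mul_self_sqrt (abs_nonneg (deriv φ (eμ * jap γ v)))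
    simp only [hfdef, hgdef]
    linear_combination (wrad x v * h (x, v)) * hms
  have hCS := integral_cauchy_schwarz' volume f g
    (by rw [hc1]; exact hI2) (by rw [hc2]; exact hI3) (by rw [hc3]; exact hI1)
  rw [hc1, hc2, hc3] at hCS
  -- rotation: replace wrad x by the first coordinate
  set u : E3 := r⁻¹ • x with hudef
  have her : ‖er‖ = 1 := by
    rw [er, EuclideanSpace.norm_single]
    norm_num
  have hu1 : ‖u‖ = 1 := by
    rw [hudef, norm_smul, ← hrdef, Real.norm_eq_abs, abs_of_pos (inv_pos.mpr hr)]
    exact inv_mul_cancel₀ hr.ne'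
  set A := (Submodule.reflection (ℝ ∙ (er - u))ᗮ : E3 ≃ₗᵢ[ℝ] E3) with hAdef
  have hA : A er = u := Submodule.reflection_sub (by rw [her, hu1])
  have hAmp : MeasurePreserving (A.toHomeomorph.toMeasurableEquiv) volume volume :=
    A.measurePreserving
  have hcomp := hAmp.integral_comp'
    (fun v : E3 => |deriv φ (eμ * jap γ v)| * (wrad x v) ^ 2)
  have hre : (∫ v : E3, |deriv φ (eμ * jap γ v)| * (wrad x v) ^ 2)
      = ∫ v : E3, |deriv φ (eμ * jap γ v)| * (v 0) ^ 2 := by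
    rw [← hcomp]
    congr 1
    funext v
    have hAv : (A.toHomeomorph.toMeasurableEquiv v) = A v := rfl
    rw [hAv]
    have hjA : jap γ (A v) = jap γ v := by rw [jap, jap, A.norm_map]
    have hdot : dot3 x (A v) = r * v 0 := by
      have h6 : dot3 x (A v) = inner ℝ x (A v) := by
        rw [dot3, PiLp.inner_apply]
        simp [RCLike.inner_apply, conj_trivial, mul_comm]
      have hxu : x = r • u := by rw [hudef, smul_inv_smul₀ hr.ne']
      rw [h6]
      calc (inner ℝ x (A v) : ℝ) = inner ℝ (r • u : E3) (A v) := by rw [← hxu]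
        _ = r * inner ℝ u (A v) := real_inner_smul_left _ _ _
        _ = r * inner ℝ (A er) (A v) := by rw [hA]
        _ = r * inner ℝ er v := by rw [A.inner_map_map]
        _ = r * v 0 := by
            rw [er, EuclideanSpace.inner_single_left]
            simp
    have hwA : wrad x (A v) = v 0 := by
      rw [wrad, hdot, ← hrdef]
      field_simp
    rw [hjA, hwA]
  -- integration by parts identity
  have hzero := ibp_zero γ eμ R hγ hRpos φ hφ hbig
  have hreshape : (fun v : E3 => γ * eμ * deriv φ (eμ * jap γ v) * (v 0) ^ 2
      + (φ (eμ * jap γ v) * jap γ v + γ * φ (eμ * jap γ v) * ((v 0) ^ 2 / jap γ v)))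
      = fun v : E3 => (γ * eμ) * (deriv φ (eμ * jap γ v) * (v 0) ^ 2)
        + (φ (eμ * jap γ v) * jap γ v + γ * (φ (eμ * jap γ v) * ((v 0) ^ 2 / jap γ v))) := by
    funext v; ring
  rw [hreshape] at hzero
  have hI4 : Integrable fun v : E3 => deriv φ (eμ * jap γ v) * (v 0) ^ 2 :=
    hInt _ (hdφE.mul ((hproj 0).pow 2)) fun v hv => by rw [(hvan v hv).2]; simp
  have hI5 : Integrable fun v : E3 => φ (eμ * jap γ v) * jap γ v :=
    hInt _ (hφE.mul hjc) fun v hv => by rw [(hvan v hv).1]; simp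
  have hI6 : Integrable fun v : E3 => φ (eμ * jap γ v) * ((v 0) ^ 2 / jap γ v) :=
    hInt _ (hφE.mul (((hproj 0).pow 2).div hjc fun v => (hjap_pos v).ne'))
      fun v hv => by rw [(hvan v hv).1]; simp
  have hI56 : Integrable (fun v : E3 => φ (eμ * jap γ v) * jap γ v
      + γ * (φ (eμ * jap γ v) * ((v 0) ^ 2 / jap γ v))) volume := hI5.add (hI6.const_mul γ)
  have hI6' : Integrable (fun v : E3 => γ * (φ (eμ * jap γ v) * ((v 0) ^ 2 / jap γ v))) volume :=
    hI6.const_mul γ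
  rw [integral_add (hI4.const_mul _) hI56, integral_add hI5 hI6',
      integral_const_mul, integral_const_mul] at hzero
  -- identification of rho0 and p0
  have hrer : ‖(r • er : E3)‖ = r := by
    rw [norm_smul, her, Real.norm_eq_abs, abs_of_pos hr, mul_one]
  have hρ : rho0 γ mu0 φ r = ∫ v : E3, φ (eμ * jap γ v) * jap γ v := by
    rw [rho0]
    congr 1
    funext v
    simp only [f0, energy]
    rw [hrer, ← heμdef]
    ring
  have hp : p0 γ mu0 φ r = ∫ v : E3, φ (eμ * jap γ v) * ((v 0) ^ 2 / jap γ v) := by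
    rw [p0]
    congr 1
    funext v
    have hw0 : wrad (r • er) v = v 0 := by
      have hd : dot3 (r • er) v = r * v 0 := by
        rw [dot3, Fin.sum_univ_three]
        simp [er, PiLp.smul_apply, EuclideanSpace.single_apply]
      rw [wrad, hd, hrer]
      field_simp
    simp only [f0, energy, hw0]
    rw [hrer, ← heμdef]
    ring
  -- value of the weighted integral
  have hval : (∫ v : E3, |deriv φ (eμ * jap γ v)| * (v 0) ^ 2)
      = (rho0 γ mu0 φ r + γ * p0 γ mu0 φ r) / (γ * eμ) := by
    have habs : (fun v : E3 => |deriv φ (eμ * jap γ v)| * (v 0) ^ 2)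
        = fun v : E3 => -(deriv φ (eμ * jap γ v) * (v 0) ^ 2) := by
      funext v
      rw [abs_of_nonpos (hdnp _)]
      ring
    rw [habs, integral_neg, hρ, hp, eq_div_iff (mul_pos hγ heμ).ne']
    linear_combination -hzero
  -- field equations
  obtain ⟨hfe1, hfe2⟩ := hfe
  have h1 := hfe1 r hr
  have h2 := hfe2 r hr
  have hX : Real.exp (-2 * lam0 r) * (2 * r) * (deriv lam0 r + deriv mu0 r)
      = 8 * π * γ * r ^ 2 * rho0 γ mu0 φ r + 8 * π * γ ^ 2 * r ^ 2 * p0 γ mu0 φ r := by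
    linear_combination h1 + h2
  have hπ : (0:ℝ) < π := Real.pi_pos
  have hcancel : Real.exp (-2 * lam0 r) * Real.exp (2 * lam0 r) = 1 := by
    rw [← Real.exp_add]
    norm_num
  have hXval : deriv lam0 r + deriv mu0 r
      = 4 * π * γ * r * Real.exp (2 * lam0 r) * (rho0 γ mu0 φ r + γ * p0 γ mu0 φ r) := by
    have hne : Real.exp (-2 * lam0 r) * (2 * r) ≠ 0 :=
      ne_of_gt (mul_pos (Real.exp_pos _) (by linarith))
    apply mul_left_cancel₀ hne
    linear_combination hX
      - (8 * π * γ * r ^ 2 * (rho0 γ mu0 φ r + γ * p0 γ mu0 φ r)) * hcancel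
  have hC : Real.exp (-2 * lam0 r - mu0 r) / (4 * π * γ ^ 2 * r) * (deriv lam0 r + deriv mu0 r)
      = (rho0 γ mu0 φ r + γ * p0 γ mu0 φ r) / (γ * eμ) := by
    rw [hXval, show -2 * lam0 r - mu0 r = -(2 * lam0 r) + -(mu0 r) by ring, Real.exp_add,
      Real.exp_neg, Real.exp_neg, ← heμdef]
    field_simp
  calc (∫ v : E3, |deriv φ (eμ * jap γ v)| * wrad x v * h (x, v)) ^ 2
      ≤ (∫ v : E3, |deriv φ (eμ * jap γ v)| * (wrad x v) ^ 2)
        * ∫ v : E3, |deriv φ (eμ * jap γ v)| * (h (x, v)) ^ 2 := hCS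
    _ = Real.exp (-2 * lam0 r - mu0 r) / (4 * π * γ ^ 2 * r) * (deriv lam0 r + deriv mu0 r)
        * ∫ v : E3, |deriv φ (eμ * jap γ v)| * (h (x, v)) ^ 2 := by
      rw [hre, hval, ← hC]
end
end
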